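/- Let M be a left-cancellative monoid generated by a set S, let M̄ be a commutative monoid generated by S satisfying: for all s,t,s′,t′ in S, if s ≠ t and st′ = ts′ in M̄ then s′ = s and t′ = t. Let ν : M̄ → M be a bijection with ν(1) = 1 and ν(s) = s for s in S, and let ψ assign to each a in M̄ a permutation ψ(a) of S such that ν(a·s) = ν(a)·ψ(a)(s) for all a in M̄ and s in S, with ψ(1) the identity. Define s∘t = ψ(s)(t) for s,t in S. Then (S,∘) is an RC-quasigroup: ∘ obeys the right-cyclic law (x∘y)∘(x∘z) = (y∘x)∘(y∘z) and all left-translations t ↦ s∘t are bijective. -/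

import Mathlib

/-- The right-cyclic law: `(x∘y)∘(x∘z) = (y∘x)∘(y∘z)`. -/
def RCLaw {S : Type*} (op : S → S → S) : Prop :=
  ∀ x y z : S, op (op x y) (op x z) = op (op y x) (op y z)

/-- Let `M` be a left-cancellative monoid generated by `S`, `M̄` a
commutative monoid generated by `S` in which `s ≠ t` and `st′ = ts′` imply `s′ = s` and
`t′ = t`, and let `ν : M̄ → M` be a right `I`-structure of shape `(M̄,S)`, with associated
permutations `ψ(a)` of `S` satisfying `ν(a·s) = ν(a)·ψ(a)(s)` and `ψ(1) = id`. Then the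
operation `s∘t = ψ(s)(t)` makes `(S,∘)` an RC-quasigroup. -/
theorem statement12 {S M Mb : Type*} [Monoid M] [CommMonoid Mb]
    (ιM : S → M) (ιb : S → Mb)
    (hgenM : Submonoid.closure (Set.range ιM) = ⊤)
    (hgenMb : Submonoid.closure (Set.range ιb) = ⊤)
    (hcancel : ∀ a b c : M, a * b = a * c → b = c)
    (hcond : ∀ s t s' t' : S, s ≠ t → ιb s * ιb t' = ιb t * ιb s' → s' = s ∧ t' = t)
    (ν : Mb → M) (hν : Function.Bijective ν)
    (hν1 : ν 1 = 1) (hνS : ∀ s : S, ν (ιb s) = ιM s)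
    (ψ : Mb → Equiv.Perm S)
    (hψ : ∀ (a : Mb) (s : S), ν (a * ιb s) = ν a * ιM (ψ a s))
    (hψ1 : ψ 1 = Equiv.refl S)
    (op : S → S → S) (hop : ∀ s t : S, op s t = ψ (ιb s) t) :
    RCLaw op ∧ ∀ s : S, Function.Bijective (op s) := by
  have hopbij : ∀ s : S, Function.Bijective (op s) := by
    intro s
    have : op s = ψ (ιb s) := funext fun t => hop s t
    rw [this]
    exact (ψ (ιb s)).bijective
  -- ν of a product of two generators
  have hν2 : ∀ x y : S, ν (ιb x * ιb y) = ιM x * ιM (op x y) := by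
    intro x y
    rw [hψ, hνS, hop]
  -- Equation (1): comparing ν(xyz) with z peeled last vs y peeled last
  have eq1 : ∀ x y z : S,
      ιM (op x y) * ιM (ψ (ιb x * ιb y) z) = ιM (op x z) * ιM (ψ (ιb x * ιb z) y) := by
    intro x y z
    apply hcancel (ιM x)
    have h1 : ν (ιb x * ιb y * ιb z) = ιM x * (ιM (op x y) * ιM (ψ (ιb x * ιb y) z)) := by
      rw [hψ, hν2, mul_assoc]
    have h2 : ν (ιb x * ιb z * ιb y) = ιM x * (ιM (op x z) * ιM (ψ (ιb x * ιb z) y)) := by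
      rw [hψ, hν2, mul_assoc]
    have hc : ιb x * ιb y * ιb z = ιb x * ιb z * ιb y := by
      rw [mul_assoc, mul_assoc, mul_comm (ιb y)]
    rw [← h1, ← h2, hc]
  -- Key lemma for y ≠ z
  have key_ne : ∀ x y z : S, y ≠ z → ψ (ιb x * ιb y) z = op (op x y) (op x z) := by
    intro x y z hyz
    set t := (ψ (ιb (op x y)))⁻¹ (ψ (ιb x * ιb y) z) with ht
    set u := (ψ (ιb (op x z)))⁻¹ (ψ (ιb x * ιb z) y) with hu
    have hxy_ne : op x y ≠ op x z := fun h => hyz ((hopbij x).injective h)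
    have e1 : ν (ιb (op x y) * ιb t) = ιM (op x y) * ιM (ψ (ιb x * ιb y) z) := by
      rw [hψ, hνS, ht, Equiv.Perm.coe_inv, Equiv.apply_symm_apply]
    have e2 : ν (ιb (op x z) * ιb u) = ιM (op x z) * ιM (ψ (ιb x * ιb z) y) := by
      rw [hψ, hνS, hu, Equiv.Perm.coe_inv, Equiv.apply_symm_apply]
    have e3 : ν (ιb (op x y) * ιb t) = ν (ιb (op x z) * ιb u) := by
      rw [e1, e2, eq1 x y z]
    have e4 : ιb (op x y) * ιb t = ιb (op x z) * ιb u := hν.injective e3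
    have := hcond (op x y) (op x z) u t hxy_ne e4
    have htval : t = op x z := this.2
    have : ψ (ιb x * ιb y) z = ψ (ιb (op x y)) t := by
      rw [ht, Equiv.Perm.coe_inv, Equiv.apply_symm_apply]
    rw [this, htval, ← hop]
  -- Key lemma in general: two bijections agreeing off a point agree at it
  have key : ∀ x y z : S, ψ (ιb x * ιb y) z = op (op x y) (op x z) := by
    intro x y z
    rcases eq_or_ne y z with rfl | hne
    · -- f = ψ (ιb x * ιb y), g = fun w => op (op x y) (op x w); agree off y
      set f := ψ (ιb x * ιb y) with hf
      have hgbij : Function.Bijective (fun w => op (op x y) (op x w)) :=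
        (hopbij (op x y)).comp (hopbij x)
      obtain ⟨w, hw⟩ := hgbij.surjective (f y)
      rcases eq_or_ne w y with rfl | hwne
      · exact hw.symm
      · exfalso
        have : f w = op (op x y) (op x w) := key_ne x y w hwne.symm
        have : f w = f y := this.trans hw
        exact hwne (f.injective this)
    · exact key_ne x y z hne
  refine ⟨fun x y z => ?_, hopbij⟩
  have := key x y z
  rw [mul_comm (ιb x) (ιb y)] at this
  rw [← this, key y x z]
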